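/- arXiv:2407.10557 — 2 statements merged into one kernel-verified Lean document; each statement's English description precedes it below -/
import Mathlib

section
/- For a, b > 0 and p ∈ ℝ, the function x ↦ ((a/b)^(p/2) / (2 K_p(√(ab)))) · x^(p-1) · exp(-(a x + b/x)/2) on (0, ∞) integrates to 1, i.e., ∫_0^∞ x^(p-1) exp(-(a x + b/x)/2) dx = 2 (b/a)^(p/2) K_p(√(ab)). -/
open MeasureTheory Real Filter Set

/-- Modified Bessel function of the second kind (for `x > 0`),
via the integral representation `K_p(x) = ∫_0^∞ exp(-x cosh t) cosh(p t) dt`. -/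
noncomputable def besselK (p x : ℝ) : ℝ :=
  ∫ t in Set.Ioi (0:ℝ), Real.exp (-x * Real.cosh t) * Real.cosh (p * t)

/-- The generalized inverse Gaussian density on `(0, ∞)`. -/
noncomputable def gigDensity (a b p x : ℝ) : ℝ :=
  if 0 < x then
    (a / b) ^ (p / 2) / (2 * besselK p (Real.sqrt (a * b)))
      * x ^ (p - 1) * Real.exp (-(a * x + b / x) / 2)
  else 0

lemma gig_aux_tendsto (A B : ℝ) (hB : 0 < B) :
    Tendsto (fun t : ℝ => A * t - B * Real.cosh t) atTop atBot := by
  have hg : Tendsto (fun t : ℝ => (A * (t * Real.exp (-t)) - B / 2) * Real.exp t)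
      atTop atBot := by
    refine Filter.Tendsto.neg_mul_atTop (C := -(B / 2)) (by linarith) ?_ Real.tendsto_exp_atTop
    have h0 : Tendsto (fun t : ℝ => t * Real.exp (-t)) atTop (nhds 0) := by
      simpa using Real.tendsto_pow_mul_exp_neg_atTop_nhds_zero 1
    have := (h0.const_mul A).sub_const (B / 2)
    simpa using this
  refine tendsto_atBot_mono (fun t => ?_) hg
  have h1 : Real.exp t / 2 ≤ Real.cosh t := by
    rw [Real.cosh_eq]
    have := (Real.exp_pos (-t)).le
    linarith
  have h2 : (A * (t * Real.exp (-t)) - B / 2) * Real.exp t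
      = A * t - B / 2 * Real.exp t := by
    rw [Real.exp_neg]
    field_simp
  rw [h2]
  nlinarith

lemma gig_aux_int (q c : ℝ) (hc : 0 < c) :
    IntegrableOn (fun t => Real.exp (q * t - c * Real.cosh t)) (Set.Ioi (0:ℝ)) := by
  apply integrable_of_isBigO_exp_neg (one_pos)
  · fun_prop
  · rw [Asymptotics.isBigO_iff]
    refine ⟨1, ?_⟩
    filter_upwards [(gig_aux_tendsto (q + 1) c hc).eventually_le_atBot 0] with t ht
    have h1 : q * t - c * Real.cosh t ≤ -1 * t := by nlinarith
    rw [Real.norm_eq_abs, Real.norm_eq_abs, Real.abs_exp, Real.abs_exp, one_mul]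
    exact Real.exp_le_exp.mpr h1

lemma gig_aux_int_Iic (q c : ℝ) (hc : 0 < c) :
    IntegrableOn (fun t => Real.exp (q * t - c * Real.cosh t)) (Set.Iic (0:ℝ)) := by
  have h1 : IntegrableOn (fun t => Real.exp (-q * t - c * Real.cosh t)) (Set.Ici (0:ℝ)) :=
    (integrableOn_Ici_iff_integrableOn_Ioi).mpr (gig_aux_int (-q) c hc)
  have h2 : Integrable
      (Set.indicator (Set.Ici (0:ℝ)) (fun t => Real.exp (-q * t - c * Real.cosh t))) := by
    exact (integrable_indicator_iff measurableSet_Ici).mpr h1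
  have h3 := h2.comp_neg
  have h4 : (fun t : ℝ => Set.indicator (Set.Ici (0:ℝ))
      (fun t => Real.exp (-q * t - c * Real.cosh t)) (-t))
      = Set.indicator (Set.Iic (0:ℝ)) (fun t => Real.exp (q * t - c * Real.cosh t)) := by
    funext t
    by_cases ht : t ≤ 0
    · rw [Set.indicator_of_mem (by simpa using ht : -t ∈ Set.Ici (0:ℝ)),
        Set.indicator_of_mem (by simpa using ht : t ∈ Set.Iic (0:ℝ))]
      simp [Real.cosh_neg]
    · rw [Set.indicator_of_notMem (by simpa using ht), Set.indicator_of_notMem (by simpa using ht)]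
  rw [h4] at h3
  exact (integrable_indicator_iff measurableSet_Iic).mp h3

lemma gig_aux_integral_real (q c : ℝ) (hc : 0 < c) :
    ∫ t : ℝ, Real.exp (q * t - c * Real.cosh t)
      = 2 * ∫ t in Set.Ioi (0:ℝ), Real.exp (-c * Real.cosh t) * Real.cosh (q * t) := by
  have hInt : Integrable (fun t : ℝ => Real.exp (q * t - c * Real.cosh t)) := by
    rw [← integrableOn_univ, ← Set.Iic_union_Ioi (a := (0:ℝ))]
    exact (gig_aux_int_Iic q c hc).union (gig_aux_int q c hc)
  rw [← intervalIntegral.integral_Iic_add_Ioi (gig_aux_int_Iic q c hc) (gig_aux_int q c hc)]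
  have h1 : (∫ t in Set.Iic (0:ℝ), Real.exp (q * t - c * Real.cosh t))
      = ∫ t in Set.Ioi (0:ℝ), Real.exp (-q * t - c * Real.cosh t) := by
    have h0 := integral_comp_neg_Iic (0:ℝ) (fun t => Real.exp (-q * t - c * Real.cosh t))
    rw [neg_zero] at h0
    rw [← h0]
    refine setIntegral_congr_fun measurableSet_Iic (fun t _ => ?_)
    simp [Real.cosh_neg]
  rw [h1, ← integral_add (gig_aux_int (-q) c hc) (gig_aux_int q c hc)]
  rw [← MeasureTheory.integral_const_mul 2]
  refine setIntegral_congr_fun measurableSet_Ioi (fun t _ => ?_)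
  rw [Real.cosh_eq (q * t), Real.cosh_eq t, sub_eq_add_neg, sub_eq_add_neg, Real.exp_add,
    Real.exp_add]
  ring

lemma gig_aux_subst (s₀ : ℝ) (hs : 0 < s₀) (g : ℝ → ℝ) :
    ∫ x in Set.Ioi (0:ℝ), g x = ∫ t : ℝ, (s₀ * Real.exp t) * g (s₀ * Real.exp t) := by
  have himg : (fun t : ℝ => s₀ * Real.exp t) '' Set.univ = Set.Ioi (0:ℝ) := by
    rw [Set.image_univ]
    ext x
    simp only [Set.mem_range, Set.mem_Ioi]
    constructor
    · rintro ⟨t, rfl⟩; positivity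
    · intro hx
      refine ⟨Real.log (x / s₀), ?_⟩
      rw [Real.exp_log (by positivity)]
      field_simp
  have hderiv : ∀ t ∈ Set.univ, HasDerivWithinAt (fun t : ℝ => s₀ * Real.exp t)
      (s₀ * Real.exp t) Set.univ t :=
    fun t _ => ((Real.hasDerivAt_exp t).const_mul s₀).hasDerivWithinAt
  have hinj : Set.InjOn (fun t : ℝ => s₀ * Real.exp t) Set.univ := by
    intro x _ y _ h
    exact Real.exp_injective (mul_left_cancel₀ hs.ne' h)
  have := integral_image_eq_integral_abs_deriv_smul MeasurableSet.univ hderiv hinj g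
  rw [himg] at this
  rw [this, MeasureTheory.setIntegral_univ]
  congr 1
  funext t
  rw [smul_eq_mul, abs_of_pos (by positivity)]

/-- The GIG density integrates to 1; equivalently
`∫_0^∞ x^(p-1) exp(-(a x + b/x)/2) dx = 2 (b/a)^(p/2) K_p(√(ab))`. -/
theorem gig_density_integrates_to_one (a b p : ℝ) (ha : 0 < a) (hb : 0 < b) :
    (∫ x in Set.Ioi (0:ℝ), gigDensity a b p x) = 1 ∧
    (∫ x in Set.Ioi (0:ℝ), x ^ (p - 1) * Real.exp (-(a * x + b / x) / 2))
      = 2 * (b / a) ^ (p / 2) * besselK p (Real.sqrt (a * b)) := by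
  set c := Real.sqrt (a * b) with hc_def
  set s₀ := Real.sqrt (b / a) with hs_def
  have hc : 0 < c := Real.sqrt_pos.mpr (by positivity)
  have hs : 0 < s₀ := Real.sqrt_pos.mpr (by positivity)
  have has : a * s₀ = c := by
    have hsq : (a * s₀) ^ 2 = c ^ 2 := by
      rw [mul_pow, hs_def, hc_def, Real.sq_sqrt (by positivity), Real.sq_sqrt (by positivity)]
      field_simp
    calc a * s₀ = Real.sqrt ((a * s₀) ^ 2) := (Real.sqrt_sq (by positivity)).symm
      _ = Real.sqrt (c ^ 2) := by rw [hsq]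
      _ = c := Real.sqrt_sq hc.le
  have hbs : b / s₀ = c := by
    have hsq : (b / s₀) ^ 2 = c ^ 2 := by
      rw [div_pow, hs_def, hc_def, Real.sq_sqrt (by positivity), Real.sq_sqrt (by positivity)]
      field_simp
    calc b / s₀ = Real.sqrt ((b / s₀) ^ 2) := (Real.sqrt_sq (by positivity)).symm
      _ = Real.sqrt (c ^ 2) := by rw [hsq]
      _ = c := Real.sqrt_sq hc.le
  -- main computation
  have hmain : (∫ x in Set.Ioi (0:ℝ), x ^ (p - 1) * Real.exp (-(a * x + b / x) / 2))
      = 2 * (b / a) ^ (p / 2) * besselK p c := by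
    rw [gig_aux_subst s₀ hs]
    have heq : ∀ t : ℝ, (s₀ * Real.exp t) *
        ((s₀ * Real.exp t) ^ (p - 1) * Real.exp (-(a * (s₀ * Real.exp t) + b / (s₀ * Real.exp t)) / 2))
        = (b / a) ^ (p / 2) * Real.exp (p * t - c * Real.cosh t) := by
      intro t
      have hx : (0:ℝ) < s₀ * Real.exp t := by positivity
      have h1 : (s₀ * Real.exp t) * (s₀ * Real.exp t) ^ (p - 1) = (s₀ * Real.exp t) ^ p := by
        nth_rewrite 1 [← Real.rpow_one (s₀ * Real.exp t)]
        rw [← Real.rpow_add hx, show (1:ℝ) + (p - 1) = p by ring]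
      have h2 : (s₀ * Real.exp t) ^ p = (b / a) ^ (p / 2) * Real.exp (p * t) := by
        rw [Real.mul_rpow hs.le (Real.exp_pos t).le]
        congr 1
        · rw [hs_def, Real.sqrt_eq_rpow, ← Real.rpow_mul (by positivity)]
          congr 1; ring
        · rw [← Real.exp_mul, mul_comm]
      have h3 : a * (s₀ * Real.exp t) + b / (s₀ * Real.exp t)
          = 2 * c * Real.cosh t := by
        rw [Real.cosh_eq]
        have : b / (s₀ * Real.exp t) = (b / s₀) * Real.exp (-t) := by
          rw [Real.exp_neg]
          field_simp
        rw [this, hbs, ← mul_assoc, has]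
        ring
      rw [← mul_assoc, h1, h2, h3]
      rw [mul_assoc, ← Real.exp_add]
      congr 2
      ring
    simp_rw [heq]
    rw [MeasureTheory.integral_const_mul]
    rw [gig_aux_integral_real p c hc, besselK]
    ring
  refine ⟨?_, hmain⟩
  -- positivity of the Bessel integral
  have hbint : IntegrableOn (fun t => Real.exp (-c * Real.cosh t) * Real.cosh (p * t))
      (Set.Ioi (0:ℝ)) := by
    have h : IntegrableOn (fun t => (Real.exp (p * t - c * Real.cosh t)
        + Real.exp (-p * t - c * Real.cosh t)) / 2) (Set.Ioi (0:ℝ)) :=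
      ((gig_aux_int p c hc).add (gig_aux_int (-p) c hc)).div_const 2
    refine h.congr_fun (fun t _ => ?_) measurableSet_Ioi
    dsimp only
    rw [Real.cosh_eq (p * t), Real.cosh_eq t, sub_eq_add_neg, sub_eq_add_neg, Real.exp_add,
      Real.exp_add]
    ring
  have hKpos : 0 < besselK p c := by
    rw [besselK]
    refine (setIntegral_pos_iff_support_of_nonneg_ae ?_ hbint).mpr ?_
    · filter_upwards with t
      positivity
    · have hsupp : Function.support (fun t => Real.exp (-c * Real.cosh t) * Real.cosh (p * t))
          = Set.univ := by
        ext t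
        simp only [Function.mem_support, Set.mem_univ, iff_true]
        positivity
      rw [hsupp, Set.univ_inter]
      simp [Real.volume_Ioi]
  -- part 1
  have h1 : (∫ x in Set.Ioi (0:ℝ), gigDensity a b p x)
      = (a / b) ^ (p / 2) / (2 * besselK p c) *
        ∫ x in Set.Ioi (0:ℝ), x ^ (p - 1) * Real.exp (-(a * x + b / x) / 2) := by
    rw [← MeasureTheory.integral_const_mul]
    refine setIntegral_congr_fun measurableSet_Ioi (fun x hx => ?_)
    rw [gigDensity, if_pos (Set.mem_Ioi.mp hx)]
    ring
  rw [h1, hmain]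
  have hab : (a / b) ^ (p / 2) * (b / a) ^ (p / 2) = 1 := by
    rw [← Real.mul_rpow (by positivity) (by positivity)]
    rw [show a / b * (b / a) = 1 by field_simp]
    exact Real.one_rpow _
  field_simp
  nlinarith [hKpos, hab, Real.rpow_pos_of_pos (show (0:ℝ) < a / b by positivity) (p / 2)]
end

section
/- For a, b > 0, p ∈ ℝ, and any complex number s, the Mellin transform of the GIG density equals ∫_0^∞ x^(s-1) f(x) dx = (a/b)^((1-s)/2) · K_{s+p-1}(√(ab)) / K_p(√(ab)), and in particular this integral converges absolutely for every s ∈ ℂ. -/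
open MeasureTheory Real Filter Set

/-- Modified Bessel function of the second kind with complex order. -/
noncomputable def besselKC (ν : ℂ) (x : ℝ) : ℂ :=
  ∫ t in Set.Ioi (0:ℝ), Complex.exp (-(x:ℂ) * Real.cosh t) * Complex.cosh (ν * t)

lemma integrable_exp_neg_abs' : Integrable (fun t : ℝ => Real.exp (-|t|)) := by
  have h1 : IntegrableOn (fun t : ℝ => Real.exp (-|t|)) (Ioi 0) := by
    refine (exp_neg_integrableOn_Ioi 0 one_pos).congr_fun ?_ measurableSet_Ioi
    intro t ht
    simp [abs_of_pos (mem_Ioi.mp ht)]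
  have h2 : IntegrableOn (fun t : ℝ => Real.exp (-|t|)) (Iic 0) := by
    refine (integrableOn_exp_Iic 0).congr_fun ?_ measurableSet_Iic
    intro t ht
    simp [abs_of_nonpos (mem_Iic.mp ht)]
  have := h2.union h1
  rwa [Iic_union_Ioi, integrableOn_univ] at this

lemma integrable_exp_sub_cosh (ρ c : ℝ) (hc : 0 < c) :
    Integrable (fun t : ℝ => Real.exp (ρ * t - c * Real.cosh t)) := by
  obtain ⟨A, hA⟩ : ∃ A : ℝ, A = |ρ| + 1 := ⟨_, rfl⟩
  have hA0 : 0 < A := by rw [hA]; positivity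
  refine (integrable_exp_neg_abs'.const_mul (Real.exp (2 * A ^ 2 / c))).mono'
    ((Real.continuous_exp.comp (by continuity)).aestronglyMeasurable)
    (Eventually.of_forall fun t => ?_)
  rw [norm_eq_abs, abs_of_pos (exp_pos _), ← Real.exp_add]
  refine Real.exp_le_exp.mpr ?_
  have h1 : ρ * t + |t| ≤ A * |t| := by
    rw [hA]
    have : ρ * t ≤ |ρ| * |t| := (le_abs_self _).trans (le_of_eq (abs_mul _ _))
    nlinarith [abs_nonneg t]
  have h2 : Real.exp |t| / 2 ≤ Real.cosh t := by
    rw [← Real.cosh_abs, Real.cosh_eq]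
    have := Real.exp_pos (-|t|)
    linarith
  have he : Real.exp |t| = Real.exp (|t| / 2) * Real.exp (|t| / 2) := by
    rw [← Real.exp_add]; ring_nf
  have h3 : |t| ^ 2 / 4 ≤ Real.exp |t| := by
    nlinarith [Real.add_one_le_exp (|t| / 2), abs_nonneg t, Real.exp_pos (|t| / 2)]
  have h5 : c * (|t| ^ 2 / 8) ≤ c * Real.cosh t := by
    refine mul_le_mul_of_nonneg_left (by linarith) hc.le
  have key : A * |t| ≤ 2 * A ^ 2 / c + c * (|t| ^ 2 / 8) := by
    have hm : A * |t| * (2 * c) ≤ 4 * A ^ 2 + c ^ 2 * |t| ^ 2 / 4 := by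
      nlinarith [sq_nonneg (2 * A - c * |t| / 2)]
    have := (le_div_iff₀ (by positivity : (0:ℝ) < 2 * c)).mpr hm
    calc A * |t| ≤ (4 * A ^ 2 + c ^ 2 * |t| ^ 2 / 4) / (2 * c) := this
      _ = 2 * A ^ 2 / c + c * (|t| ^ 2 / 8) := by field_simp; ring
  linarith

lemma integrable_G (ν : ℂ) {c : ℝ} (hc : 0 < c) :
    Integrable (fun t : ℝ => Complex.exp (ν * t) * Complex.exp (-(c:ℂ) * Real.cosh t)) := by
  refine (integrable_exp_sub_cosh ν.re c hc).mono'
    ((Complex.continuous_exp.comp (by continuity)).mul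
      (Complex.continuous_exp.comp (by continuity))).aestronglyMeasurable
    (Eventually.of_forall fun t => ?_)
  rw [norm_mul, Complex.norm_exp, Complex.norm_exp]
  rw [← Real.exp_add]
  apply Real.exp_le_exp.mpr
  simp [Complex.mul_re]

lemma integral_G (ν : ℂ) {c : ℝ} (hc : 0 < c) :
    ∫ t : ℝ, Complex.exp (ν * t) * Complex.exp (-(c:ℂ) * Real.cosh t)
      = 2 * besselKC ν c := by
  set G := fun t : ℝ => Complex.exp (ν * t) * Complex.exp (-(c:ℂ) * Real.cosh t) with hG
  have hInt := integrable_G ν hc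
  have hsplit : (∫ t in Iic (0:ℝ), G t) + ∫ t in Ioi (0:ℝ), G t = ∫ t : ℝ, G t :=
    intervalIntegral.integral_Iic_add_Ioi hInt.integrableOn hInt.integrableOn
  have hneg : (∫ t in Iic (0:ℝ), G t) = ∫ t in Ioi (0:ℝ), G (-t) := by
    simpa using (integral_comp_neg_Iic 0 (fun x => G (-x)))
  have hIntNeg : Integrable (fun t => G (-t)) := hInt.comp_neg
  rw [← hsplit, hneg, ← integral_add hIntNeg.integrableOn hInt.integrableOn]
  rw [besselKC, ← MeasureTheory.integral_const_mul]
  refine setIntegral_congr_fun measurableSet_Ioi fun t _ => ?_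
  simp only [hG]
  have h2 : Complex.exp (ν * ((-t:ℝ):ℂ)) * Complex.exp (-(c:ℂ) * ((Real.cosh (-t):ℝ):ℂ))
      + Complex.exp (ν * t) * Complex.exp (-(c:ℂ) * Real.cosh t)
      = (Complex.exp (ν * (t:ℂ)) + Complex.exp (-(ν * (t:ℂ)))) * Complex.exp (-(c:ℂ) * Real.cosh t) := by
    rw [Real.cosh_neg, Complex.ofReal_neg, mul_neg]
    ring
  rw [h2, ← Complex.two_cosh]
  ring

lemma mellin_core (a b : ℝ) (ha : 0 < a) (hb : 0 < b) (ν : ℂ) :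
    IntegrableOn (fun x : ℝ => (x:ℂ) ^ (ν - 1) * (Real.exp (-(a*x + b/x)/2) : ℂ)) (Ioi 0) ∧
    ∫ x in Ioi (0:ℝ), (x:ℂ) ^ (ν - 1) * (Real.exp (-(a*x + b/x)/2) : ℂ)
      = Complex.exp (ν * (Real.log (Real.sqrt (b/a)) : ℂ)) * (2 * besselKC ν (Real.sqrt (a*b))) := by
  set r := Real.sqrt (b/a) with hrdef
  set c := Real.sqrt (a*b) with hcdef
  have hr : 0 < r := Real.sqrt_pos.mpr (by positivity)
  have hc : 0 < c := Real.sqrt_pos.mpr (by positivity)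
  have harc : a * r = c := by
    rw [hrdef, hcdef, show a * b = a^2 * (b/a) from by field_simp,
      Real.sqrt_mul (sq_nonneg a), Real.sqrt_sq ha.le]
  have hbrc : b / r = c := by
    rw [hrdef, hcdef, show a * b = b^2 / (b/a) from by field_simp,
      Real.sqrt_div (sq_nonneg b), Real.sqrt_sq hb.le]
  -- the substitution x = r * exp t
  set f : ℝ → ℝ := fun t => r * Real.exp t with hf
  have hf' : ∀ t ∈ (univ : Set ℝ), HasDerivWithinAt f (r * Real.exp t) univ t :=
    fun t _ => ((Real.hasDerivAt_exp t).const_mul r).hasDerivWithinAt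
  have hinj : InjOn f univ := by
    intro x _ y _ hxy
    have := mul_left_cancel₀ hr.ne' hxy
    exact Real.exp_injective this
  have himg : f '' univ = Ioi 0 := by
    apply Subset.antisymm
    · rintro x ⟨t, -, rfl⟩
      exact mul_pos hr (Real.exp_pos t)
    · intro x hx
      refine ⟨Real.log (x / r), mem_univ _, ?_⟩
      simp only [hf, Real.exp_log (div_pos hx hr)]
      field_simp
  set g : ℝ → ℂ := fun x => (x:ℂ) ^ (ν - 1) * (Real.exp (-(a*x + b/x)/2) : ℂ) with hg
  -- pointwise identity
  have hpt : ∀ t : ℝ, |r * Real.exp t| • g (f t)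
      = Complex.exp (ν * (Real.log r : ℂ)) *
        (Complex.exp (ν * t) * Complex.exp (-(c:ℂ) * Real.cosh t)) := by
    intro t
    have hft : 0 < f t := mul_pos hr (Real.exp_pos t)
    have hftC : (f t : ℂ) ≠ 0 := Complex.ofReal_ne_zero.mpr hft.ne'
    have e1 : -(a * f t + b / f t)/2 = -c * Real.cosh t := by
      simp only [hf]
      rw [Real.cosh_eq]
      have : b / (r * Real.exp t) = (b / r) * Real.exp (-t) := by
        rw [Real.exp_neg]; field_simp
      rw [this, hbrc]
      linear_combination (-(Real.exp t)/2) * harc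
    have e2 : (f t : ℂ) ^ (ν - 1) * (f t : ℂ) = (f t : ℂ) ^ ν := by
      rw [Complex.cpow_sub _ _ hftC, Complex.cpow_one]
      field_simp
    have e3 : (f t : ℂ) ^ ν = Complex.exp (ν * (Real.log r : ℂ)) * Complex.exp (ν * t) := by
      rw [Complex.cpow_def_of_ne_zero hftC, ← Complex.exp_add]
      congr 1
      rw [← Complex.ofReal_log hft.le]
      simp only [hf]
      rw [Real.log_mul hr.ne' (Real.exp_pos t).ne', Real.log_exp]
      push_cast
      ring
    rw [abs_of_pos (show (0:ℝ) < r * Real.exp t from hft), Complex.real_smul]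
    calc (↑(f t) : ℂ) * g (f t)
        = ((f t : ℂ) ^ (ν - 1) * (f t : ℂ)) * (Real.exp (-(a * f t + b / f t)/2) : ℂ) := by
          simp only [hg]; ring
      _ = _ := by rw [e2, e3, e1]; push_cast; ring
  have hGint : Integrable (fun t : ℝ =>
      Complex.exp (ν * (Real.log r : ℂ)) *
        (Complex.exp (ν * t) * Complex.exp (-(c:ℂ) * Real.cosh t))) :=
    (integrable_G ν hc).const_mul _
  constructor
  · rw [← himg, integrableOn_image_iff_integrableOn_abs_deriv_smul MeasurableSet.univ hf' hinj g]
    rw [integrableOn_univ]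
    exact hGint.congr (Eventually.of_forall fun t => (hpt t).symm)
  · rw [← himg, integral_image_eq_integral_abs_deriv_smul MeasurableSet.univ hf' hinj g]
    calc ∫ t in univ, |r * Real.exp t| • g (f t)
        = ∫ t : ℝ, Complex.exp (ν * (Real.log r : ℂ)) *
            (Complex.exp (ν * t) * Complex.exp (-(c:ℂ) * Real.cosh t)) := by
          rw [Measure.restrict_univ]
          exact integral_congr_ae (Eventually.of_forall hpt)
      _ = _ := by
          rw [MeasureTheory.integral_const_mul, integral_G ν hc]

lemma cosh_le_exp_abs (x : ℝ) : Real.cosh x ≤ Real.exp |x| := by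
  rw [Real.cosh_eq]
  have h1 : Real.exp x ≤ Real.exp |x| := Real.exp_le_exp.mpr (le_abs_self x)
  have h2 : Real.exp (-x) ≤ Real.exp |x| := Real.exp_le_exp.mpr (neg_le_abs x)
  linarith

lemma integrableOn_besselK_integrand (p : ℝ) {c : ℝ} (hc : 0 < c) :
    IntegrableOn (fun t : ℝ => Real.exp (-c * Real.cosh t) * Real.cosh (p * t)) (Ioi 0) := by
  refine ((integrable_exp_sub_cosh |p| c hc).integrableOn.mono' ?_ ?_)
  · exact ((Real.continuous_exp.comp (by continuity)).mul
      (Real.continuous_cosh.comp (by continuity))).aestronglyMeasurable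
  · refine (ae_restrict_iff' measurableSet_Ioi).mpr (Eventually.of_forall fun t ht => ?_)
    have ht0 : 0 < t := ht
    have h1 : Real.cosh (p * t) ≤ Real.exp (|p| * t) := by
      calc Real.cosh (p * t) ≤ Real.exp |p * t| := cosh_le_exp_abs _
        _ = Real.exp (|p| * t) := by rw [abs_mul, abs_of_pos ht0]
    rw [norm_mul, norm_eq_abs, norm_eq_abs, abs_of_pos (Real.exp_pos _),
      abs_of_pos (Real.cosh_pos _)]
    rw [show |p| * t - c * Real.cosh t = -c * Real.cosh t + |p| * t by ring, Real.exp_add]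
    exact mul_le_mul_of_nonneg_left h1 (Real.exp_pos _).le

lemma besselK_pos (p : ℝ) {c : ℝ} (hc : 0 < c) : 0 < besselK p c := by
  rw [besselK]
  refine (setIntegral_pos_iff_support_of_nonneg_ae ?_ ?_).mpr ?_
  · exact Eventually.of_forall fun t => by positivity
  · exact integrableOn_besselK_integrand p hc
  · have hsupp : (Ioi (0:ℝ)) ⊆ Function.support
        (fun t : ℝ => Real.exp (-c * Real.cosh t) * Real.cosh (p * t)) := by
      intro t _
      exact (by positivity : (0:ℝ) < Real.exp (-c * Real.cosh t) * Real.cosh (p * t)).ne'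
    calc (0:ENNReal) < volume (Ioi (0:ℝ)) := by simp [Real.volume_Ioi]
      _ ≤ volume (Function.support _ ∩ Ioi 0) := measure_mono (subset_inter hsupp (subset_refl _))


/-- Mellin transform of the GIG density: for every complex `s`, the Mellin integral
converges absolutely and equals `(a/b)^((1-s)/2) K_{s+p-1}(√(ab)) / K_p(√(ab))`. -/
theorem gig_mellin_transform (a b p : ℝ) (ha : 0 < a) (hb : 0 < b) (s : ℂ) :
    MeasureTheory.IntegrableOn
        (fun x : ℝ => (x : ℂ) ^ (s - 1) * (gigDensity a b p x : ℂ)) (Set.Ioi 0) ∧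
    (∫ x in Set.Ioi (0:ℝ), (x : ℂ) ^ (s - 1) * (gigDensity a b p x : ℂ))
      = ((a / b : ℝ) : ℂ) ^ ((1 - s) / 2)
          * besselKC (s + (p : ℂ) - 1) (Real.sqrt (a * b))
          / (besselK p (Real.sqrt (a * b)) : ℂ) := by
  have hc : 0 < Real.sqrt (a * b) := Real.sqrt_pos.mpr (by positivity)
  set c := Real.sqrt (a * b) with hcdef
  have hKp : 0 < besselK p c := besselK_pos p hc
  set Kp := besselK p c with hKpdef
  set C : ℝ := (a / b) ^ (p / 2) / (2 * Kp) with hCdef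
  set ν : ℂ := s + (p : ℂ) - 1 with hνdef
  obtain ⟨hint, hval⟩ := mellin_core a b ha hb ν
  have hEq : ∀ x ∈ Ioi (0:ℝ), (x:ℂ) ^ (s - 1) * (gigDensity a b p x : ℂ)
      = (C:ℂ) * ((x:ℂ) ^ (ν - 1) * (Real.exp (-(a*x + b/x)/2) : ℂ)) := by
    intro x hx
    have hx0 : (0:ℝ) < x := hx
    have hxC : (x:ℂ) ≠ 0 := Complex.ofReal_ne_zero.mpr hx0.ne'
    rw [gigDensity, if_pos hx0, Complex.ofReal_mul, Complex.ofReal_mul,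
      Complex.ofReal_cpow hx0.le]
    have hcomb : (x:ℂ) ^ (s - 1) * (x:ℂ) ^ (((p - 1 : ℝ)):ℂ) = (x:ℂ) ^ (ν - 1) := by
      rw [← Complex.cpow_add _ _ hxC]
      congr 1
      push_cast [hνdef]
      ring
    calc (x:ℂ) ^ (s-1) * ((C:ℂ) * (x:ℂ) ^ (((p-1:ℝ)):ℂ) * (Real.exp (-(a*x+b/x)/2) : ℂ))
        = (C:ℂ) * (((x:ℂ) ^ (s-1) * (x:ℂ) ^ (((p-1:ℝ)):ℂ)) * (Real.exp (-(a*x+b/x)/2) : ℂ)) := by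
          ring
      _ = _ := by rw [hcomb]
  constructor
  · exact MeasureTheory.IntegrableOn.congr_fun (hint.const_mul (C:ℂ))
      (fun x hx => (hEq x hx).symm) measurableSet_Ioi
  · rw [setIntegral_congr_fun measurableSet_Ioi hEq, MeasureTheory.integral_const_mul, hval]
    -- algebra
    have hKpC : (Kp : ℂ) ≠ 0 := Complex.ofReal_ne_zero.mpr hKp.ne'
    have habp : (0:ℝ) < a / b := div_pos ha hb
    set L := Real.log (a / b) with hLdef
    have hlogr : Real.log (Real.sqrt (b / a)) = -(L / 2) := by
      rw [Real.log_sqrt (by positivity : (0:ℝ) ≤ b / a),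
        show b / a = (a / b)⁻¹ by field_simp, Real.log_inv, hLdef]
      ring
    have h1 : (((a / b) ^ (p / 2) : ℝ) : ℂ) = Complex.exp ((L * (p / 2) : ℝ) : ℂ) := by
      rw [Real.rpow_def_of_pos habp, Complex.ofReal_exp]
    have h3 : ((a / b : ℝ) : ℂ) ^ ((1 - s) / 2) = Complex.exp ((L:ℂ) * ((1 - s) / 2)) := by
      rw [Complex.cpow_def_of_ne_zero (Complex.ofReal_ne_zero.mpr habp.ne') _,
        ← Complex.ofReal_log habp.le]
    have hkey : (((a / b) ^ (p / 2) : ℝ) : ℂ) * Complex.exp (ν * (Real.log (Real.sqrt (b / a)) : ℂ))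
        = ((a / b : ℝ) : ℂ) ^ ((1 - s) / 2) := by
      rw [h1, h3, hlogr, ← Complex.exp_add]
      congr 1
      push_cast [hνdef]
      ring
    have hC : (C : ℂ) = (((a / b) ^ (p / 2) : ℝ) : ℂ) / (2 * (Kp : ℂ)) := by
      rw [hCdef]
      push_cast
      ring
    have halg : ∀ X E K W : ℂ, W ≠ 0 → X / (2 * W) * (E * (2 * K)) = X * E * K / W := by
      intro X E K W hW
      field_simp
    rw [hC, ← hkey]
    exact halg _ _ _ _ hKpC
end
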